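/- Let C > 0, let (δ_n) ⊂ (0,1) with δ_n → 0, let (N_n) ⊂ ℕ with N_n ≥ 2 and N_n·√δ_n → +∞, and for each n let u_n : {0,…,N_n} → S² satisfy the periodic boundary condition and the scaled energy bound H_{δ_n}(u_n) ≤ √2·C·δ_n^{3/2}. Define z_n^i := (u_n^i × u_n^{i+1})/√(2δ_n). Then there exist M > 0 and n₀ ∈ ℕ such that ‖z_n^i‖ ≤ M for all n ≥ n₀ and all 0 ≤ i ≤ N_n − 1 (equiboundedness of the chirality order parameter). -/

import Mathlib

open MeasureTheory Filter
open scoped RealInnerProductSpace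

/-- The cross product on Euclidean `ℝ³`. -/
noncomputable def cross3 (a b : EuclideanSpace ℝ (Fin 3)) : EuclideanSpace ℝ (Fin 3) :=
  (WithLp.equiv 2 (Fin 3 → ℝ)).symm
    (crossProduct ((WithLp.equiv 2 (Fin 3 → ℝ)) a) ((WithLp.equiv 2 (Fin 3 → ℝ)) b))

lemma norm_cross3_sq (a b : EuclideanSpace ℝ (Fin 3)) :
    ‖cross3 a b‖ ^ 2 = ‖a‖^2 * ‖b‖^2 - ⟪a, b⟫ ^ 2 := by
  have h : ∀ x : EuclideanSpace ℝ (Fin 3), ‖x‖^2 = ∑ i, x i ^2 := by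
    intro x
    rw [EuclideanSpace.norm_eq, Real.sq_sqrt (by positivity)]; simp [sq_abs]
  rw [h, h, h, PiLp.inner_apply]
  simp [cross3, crossProduct, Fin.sum_univ_three, WithLp.equiv_symm_apply, PiLp.toLp_apply, WithLp.equiv_apply,
    RCLike.inner_apply, conj_trivial]
  ring

lemma key_ineq (a b c : EuclideanSpace ℝ (Fin 3)) (ha : ‖a‖ = 1) (hb : ‖b‖ = 1) (hc : ‖c‖ = 1)
    (μ : ℝ) :
    (⟪b, c⟫ + ⟪a, b⟫ - μ) ^ 2
      + (Real.sqrt (1 - ⟪b, c⟫ ^ 2) - Real.sqrt (1 - ⟪a, b⟫ ^ 2)) ^ 2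
      ≤ ‖c - μ • b + a‖ ^ 2 := by
  set p := ⟪a, b⟫ with hp
  set q := ⟪b, c⟫ with hq
  have hb2 : ⟪b, b⟫ = 1 := by rw [real_inner_self_eq_norm_sq, hb]; norm_num
  set w : EuclideanSpace ℝ (Fin 3) := (c - q • b) + (a - p • b) with hw
  have hbw : ⟪b, w⟫ = 0 := by
    simp only [hw, inner_add_right, inner_sub_right, inner_smul_right, hb2]
    rw [show (inner ℝ b c : ℝ) = q from hq.symm,
      show (inner ℝ b a : ℝ) = p from (real_inner_comm a b).trans hp.symm]
    ring
  have hv : c - μ • b + a = (q + p - μ) • b + w := by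
    rw [hw]; module
  have hnc : ‖c - q • b‖ ^ 2 = 1 - q ^ 2 := by
    rw [norm_sub_sq_real, inner_smul_right, show (inner ℝ c b : ℝ) = q from (real_inner_comm b c).trans hq.symm, norm_smul, hc]
    simp [abs_mul_abs_self, hb]; ring
  have hna : ‖a - p • b‖ ^ 2 = 1 - p ^ 2 := by
    rw [norm_sub_sq_real, inner_smul_right, show (inner ℝ a b : ℝ) = p from hp.symm, norm_smul, ha]
    simp [abs_mul_abs_self, hb]; ring
  have hrc : Real.sqrt (1 - q ^ 2) = ‖c - q • b‖ := by
    rw [← hnc, Real.sqrt_sq (norm_nonneg _)]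
  have hra : Real.sqrt (1 - p ^ 2) = ‖a - p • b‖ := by
    rw [← hna, Real.sqrt_sq (norm_nonneg _)]
  have hwn : |‖c - q • b‖ - ‖a - p • b‖| ≤ ‖w‖ := by
    have h1 := abs_norm_sub_norm_le (c - q • b) (-(a - p • b))
    rw [sub_neg_eq_add, norm_neg] at h1
    simpa [hw] using h1
  have hwsq : (Real.sqrt (1 - q ^ 2) - Real.sqrt (1 - p ^ 2)) ^ 2 ≤ ‖w‖ ^ 2 := by
    rw [hrc, hra, ← sq_abs]
    exact pow_le_pow_left₀ (abs_nonneg _) hwn 2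
  have hvn : ‖c - μ • b + a‖ ^ 2 = (q + p - μ) ^ 2 + ‖w‖ ^ 2 := by
    rw [hv, norm_add_sq_real, inner_smul_left, hbw, norm_smul]
    simp [hb, mul_pow, sq_abs]
  rw [hvn]
  nlinarith [hwsq]


lemma chain_bound (f c : ℕ → ℝ) (K : ℕ) (hc : ∀ i, i < K → 0 ≤ c i)
    (h : ∀ i, i < K → |f (i+1) - f i| ≤ c i) :
    ∀ j k, j ≤ K → k ≤ K → f k ≤ f j + ∑ i ∈ Finset.range K, c i := by
  have sub : ∀ j k : ℕ, k ≤ K → Finset.Ico j k ⊆ Finset.range K := by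
    intro j k hk x hx
    rw [Finset.mem_Ico] at hx; rw [Finset.mem_range]; omega
  have aux : ∀ j k, j ≤ k → k ≤ K → f k ≤ f j + ∑ i ∈ Finset.Ico j k, c i := by
    intro j k hjk
    induction k, hjk using Nat.le_induction with
    | base => intro _; simp
    | succ k hjk ih =>
      intro hkK
      have hk : k < K := by omega
      have ihh := ih (by omega)
      have habs := abs_le.1 (h k hk)
      rw [Finset.sum_Ico_succ_top hjk]
      linarith [habs.2]
  have aux2 : ∀ k j, k ≤ j → j ≤ K → f k ≤ f j + ∑ i ∈ Finset.Ico k j, c i := by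
    intro k j hkj
    induction j, hkj using Nat.le_induction with
    | base => intro _; simp
    | succ j hkj ih =>
      intro hjK
      have hj : j < K := by omega
      have ihh := ih (by omega)
      have habs := abs_le.1 (h j hj)
      rw [Finset.sum_Ico_succ_top hkj]
      linarith [habs.1]
  intro j k hj hk
  rcases le_total j k with hjk | hkj
  · refine le_trans (aux j k hjk hk) ?_
    have := Finset.sum_le_sum_of_subset_of_nonneg (sub j k hk)
      (fun i hi _ => hc i (Finset.mem_range.1 hi))
    linarith
  · refine le_trans (aux2 k j hkj hj) ?_
    have := Finset.sum_le_sum_of_subset_of_nonneg (sub k j hj)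
      (fun i hi _ => hc i (Finset.mem_range.1 hi))
    linarith

lemma phi_lip (x y : ℝ) (hx : 0 ≤ x) (hy : 0 ≤ y) :
    |max (x-2) 0 ^ 2 - max (y-2) 0 ^ 2|
      ≤ max (max (x^2-2) 0) (max (y^2-2) 0) * |x - y| := by
  wlog hxy : y ≤ x generalizing x y
  · rw [abs_sub_comm, abs_sub_comm x y, max_comm ((x^2-2) ⊔ 0) ((y^2-2) ⊔ 0)]
    exact this y x hy hx (le_of_not_ge hxy)
  rcases le_total x 2 with h2 | h2
  · rw [max_eq_right (by linarith : x - 2 ≤ 0), max_eq_right (by linarith : y - 2 ≤ 0)]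
    simp only [ne_eq, OfNat.ofNat_ne_zero, not_false_eq_true, zero_pow, sub_zero, abs_zero]
    positivity
  · have hx2 : max (x-2) 0 = x - 2 := max_eq_left (by linarith)
    have hgx : max (x^2-2) 0 = x^2-2 := max_eq_left (by nlinarith)
    have hRfac : x^2 - 2 ≤ max (max (x^2-2) 0) (max (y^2-2) 0) := by
      rw [hgx] at *; exact le_max_left _ _
    have habs : |x - y| = x - y := abs_of_nonneg (by linarith)
    rcases le_total y 2 with h2y | h2y
    · rw [hx2, max_eq_right (by linarith : y - 2 ≤ 0), habs]
      simp only [ne_eq, OfNat.ofNat_ne_zero, not_false_eq_true, zero_pow, sub_zero]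
      rw [abs_of_nonneg (by positivity)]
      have h1 : (x-2)^2 ≤ (x^2-2)*(x-y) := by nlinarith
      have h2 : (x^2-2)*(x-y) ≤ max (max (x^2-2) 0) (max (y^2-2) 0) * (x-y) :=
        mul_le_mul_of_nonneg_right hRfac (by linarith)
      linarith
    · rw [hx2, max_eq_left (by linarith : (0:ℝ) ≤ y - 2), habs]
      rw [abs_of_nonneg (by nlinarith : (0:ℝ) ≤ (x-2)^2 - (y-2)^2)]
      have h1 : (x-2)^2 - (y-2)^2 ≤ (x^2-2)*(x-y) := by nlinarith
      have h2 : (x^2-2)*(x-y) ≤ max (max (x^2-2) 0) (max (y^2-2) 0) * (x-y) :=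
        mul_le_mul_of_nonneg_right hRfac (by linarith)
      linarith

set_option maxHeartbeats 1000000 in
/-- equiboundedness of the chirality order parameter
`z_n^i = (u_n^i × u_n^{i+1})/√(2δ_n)` for sequences whose renormalized chain energy satisfies
the scaled bound `H_{δ_n}(u_n) ≤ √2 C δ_n^{3/2}`, with `δ_n → 0` and `N_n √δ_n → ∞`. -/
theorem stmt8 (C : ℝ) (hC : 0 < C)
    (δ : ℕ → ℝ) (hδ : ∀ n, δ n ∈ Set.Ioo (0 : ℝ) 1) (hδ0 : Tendsto δ atTop (nhds 0))
    (Nn : ℕ → ℕ) (hN : ∀ n, 2 ≤ Nn n)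
    (hNδ : Tendsto (fun n => (Nn n : ℝ) * Real.sqrt (δ n)) atTop atTop)
    (u : ℕ → ℕ → EuclideanSpace ℝ (Fin 3)) (hu : ∀ n, ∀ i ≤ Nn n, ‖u n i‖ = 1)
    (hper : ∀ n, ⟪u n 1, u n 0⟫ = ⟪u n (Nn n), u n (Nn n - 1)⟫)
    (hE : ∀ n, (1 / 2 : ℝ) * ∑ i ∈ Finset.range (Nn n - 1),
        ‖u n (i + 2) - (2 * (1 - δ n)) • u n (i + 1) + u n i‖ ^ 2
      ≤ Real.sqrt 2 * C * δ n ^ ((3 : ℝ) / 2)) :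
    ∃ M : ℝ, 0 < M ∧ ∃ n₀ : ℕ, ∀ n ≥ n₀, ∀ i ≤ Nn n - 1,
      ‖(Real.sqrt (2 * δ n))⁻¹ • cross3 (u n i) (u n (i + 1))‖ ≤ M := by
  refine ⟨2 + Real.sqrt (2*C) + 1, by positivity, ?_⟩
  obtain ⟨n₀, hn₀⟩ := Filter.eventually_atTop.1
    (hNδ.eventually_ge_atTop (Real.sqrt 2 * C / 2 + 2))
  refine ⟨n₀, ?_⟩
  intro n hn i₀ hi₀
  have hEn := hE n
  have hNbig := hn₀ n hn
  set N := Nn n with hNdef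
  have hN2 : 2 ≤ N := hN n
  set d := δ n with hddef
  obtain ⟨hd0, hd1⟩ := hδ n
  have hsd0 : 0 < Real.sqrt d := Real.sqrt_pos.2 hd0
  have hsd1 : Real.sqrt d ≤ 1 := by
    nlinarith [Real.sq_sqrt hd0.le, Real.sqrt_nonneg d]
  have hsdsq : Real.sqrt d * Real.sqrt d = d := Real.mul_self_sqrt hd0.le
  -- basic sequences
  set a : ℕ → ℝ := fun i => ⟪u n i, u n (i+1)⟫ with hadef
  have ha1 : ∀ i, i + 1 ≤ N → a i ^ 2 ≤ 1 := by
    intro i hi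
    have h1 := abs_real_inner_le_norm (u n i) (u n (i+1))
    rw [hu n i (by omega), hu n (i+1) hi] at h1
    nlinarith [abs_nonneg (a i), sq_abs (a i)]
  set s : ℕ → ℝ := fun i => Real.sqrt (1 - a i ^ 2) with hsdef
  have hs0 : ∀ i, 0 ≤ s i := fun i => Real.sqrt_nonneg _
  have hssq : ∀ i, i + 1 ≤ N → s i ^ 2 = 1 - a i ^ 2 := by
    intro i hi
    exact Real.sq_sqrt (by linarith [ha1 i hi])
  -- the energy bound
  have hd32 : d ^ ((3:ℝ)/2) = d * Real.sqrt d := by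
    rw [show ((3:ℝ)/2) = 1 + 1/2 by norm_num, Real.rpow_add hd0, Real.rpow_one,
      ← Real.sqrt_eq_rpow]
  set S : ℝ := 2 * Real.sqrt 2 * C * (d * Real.sqrt d) with hSdef
  have hS0 : 0 ≤ S := by
    have := Real.sqrt_nonneg (2:ℝ)
    positivity
  have hEsum : ∑ i ∈ Finset.range (N-1),
      ((a (i+1) + a i - 2*(1-d))^2 + (s (i+1) - s i)^2) ≤ S := by
    have h2 : ∑ i ∈ Finset.range (N-1),
        ‖u n (i + 2) - (2 * (1 - d)) • u n (i + 1) + u n i‖ ^ 2 ≤ S := by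
      rw [hd32] at hEn; rw [hSdef]; linarith
    refine le_trans (Finset.sum_le_sum ?_) h2
    intro i hi
    rw [Finset.mem_range] at hi
    exact key_ineq (u n i) (u n (i+1)) (u n (i+2)) (hu n i (by omega))
      (hu n (i+1) (by omega)) (hu n (i+2) (by omega)) (2*(1-d))
  -- anchor
  have hanchor : ∃ j, j + 1 ≤ N ∧ s j ^ 2 ≤ 4 * d := by
    by_contra hcon
    push_neg at hcon
    have hterm : ∀ i ∈ Finset.range (N-1), 4*d^2 ≤ (a (i+1) + a i - 2*(1-d))^2 := by
      intro i hi
      rw [Finset.mem_range] at hi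
      have h1 := hcon i (by omega)
      have h2 := hcon (i+1) (by omega)
      have e1 := hssq i (by omega)
      have e2 := hssq (i+1) (by omega)
      nlinarith [sq_nonneg (1 - a i), sq_nonneg (1 - a (i+1))]
    have hsum : (N-1 : ℕ) * (4*d^2) ≤ S := by
      calc ((N-1 : ℕ) : ℝ) * (4*d^2) = ∑ _i ∈ Finset.range (N-1), 4*d^2 := by
            rw [Finset.sum_const, Finset.card_range, nsmul_eq_mul]
        _ ≤ ∑ i ∈ Finset.range (N-1),
            ((a (i+1) + a i - 2*(1-d))^2 + (s (i+1) - s i)^2) := by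
            refine Finset.sum_le_sum ?_
            intro i hi
            have := hterm i hi
            nlinarith [sq_nonneg (s (i+1) - s i)]
        _ ≤ S := hEsum
    -- contradiction with N √d large
    have hNc : ((N-1 : ℕ) : ℝ) = (N : ℝ) - 1 := by
      have : (1:ℕ) ≤ N := by omega
      push_cast [Nat.cast_sub this]; ring
    rw [hNc] at hsum
    have hs2 : Real.sqrt 2 ≤ 2 := by
      nlinarith [Real.sq_sqrt (by norm_num : (0:ℝ) ≤ 2), Real.sqrt_nonneg 2]
    have hNd : (N : ℝ) * Real.sqrt d ≥ Real.sqrt 2 * C / 2 + 2 := hNbig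
    -- from hsum : ((N:ℝ)-1) * (4 d²) ≤ 2 √2 C d √d
    have hN1 : (1:ℝ) ≤ (N:ℝ) := by exact_mod_cast (by omega : 1 ≤ N)
    have e1 : ((N:ℝ)-1) * (4*d^2) = (4*d*Real.sqrt d) * (Real.sqrt d * ((N:ℝ)-1)) := by
      nlinarith [hsdsq]
    have e2 : S = (4*d*Real.sqrt d) * (Real.sqrt 2 * C / 2) := by rw [hSdef]; ring
    rw [e1, e2] at hsum
    have key1 : Real.sqrt d * ((N:ℝ)-1) ≤ Real.sqrt 2 * C / 2 :=
      le_of_mul_le_mul_left hsum (by positivity)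
    nlinarith [hsd1, hsd0]
  obtain ⟨j, hjN, hjs⟩ := hanchor
  -- scaled variables
  have hw0 : 0 < Real.sqrt (2*d) := Real.sqrt_pos.2 (by linarith)
  have hwsq : Real.sqrt (2*d) * Real.sqrt (2*d) = 2*d := Real.mul_self_sqrt (by linarith)
  set w : ℝ := Real.sqrt (2*d) with hwdef
  set z : ℕ → ℝ := fun i => s i / w with hzdef
  have hz0 : ∀ i, 0 ≤ z i := fun i => div_nonneg (hs0 i) hw0.le
  have hsz : ∀ i, s i = z i * w := by
    intro i; exact (div_mul_cancel₀ (s i) hw0.ne').symm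
  have hszsq : ∀ i, s i ^ 2 = z i ^ 2 * (2*d) := by
    intro i; rw [hsz i, mul_pow, show w^2 = 2*d by rw [pow_two]; exact hwsq]
  set m : ℕ → ℝ := fun i => max (z i ^ 2 + z (i+1) ^ 2 - 2) 0 with hmdef
  have hm0 : ∀ i, 0 ≤ m i := fun i => le_max_right _ _
  -- sum bounds
  have hmsum : ∑ i ∈ Finset.range (N-1), (m i)^2 ≤ S / d^2 := by
    rw [le_div_iff₀ (by positivity)]
    rw [Finset.sum_mul]
    refine le_trans (Finset.sum_le_sum ?_) hEsum
    intro i hi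
    rw [Finset.mem_range] at hi
    have e1 := hssq i (by omega)
    have e2 := hssq (i+1) (by omega)
    have z1 := hszsq i
    have z2 := hszsq (i+1)
    rcases le_or_gt (z i ^2 + z (i+1)^2) 2 with hle | hgt
    · have : m i = 0 := by
        rw [hmdef]; exact max_eq_right (by linarith)
      rw [this]
      nlinarith [sq_nonneg (s (i+1) - s i), sq_nonneg (a (i+1) + a i - 2*(1-d))]
    · have hmi : m i = z i ^2 + z (i+1)^2 - 2 := by
        rw [hmdef]; exact max_eq_left (by linarith)
      have k1 : 1 - a i ≥ s i ^2 / 2 := by nlinarith [sq_nonneg (1 - a i)]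
      have k2 : 1 - a (i+1) ≥ s (i+1) ^2 / 2 := by nlinarith [sq_nonneg (1 - a (i+1))]
      have hE1 : a (i+1) + a i - 2*(1-d) ≤ -(d*(z i ^2 + z (i+1) ^2 - 2)) := by
        linarith
      have ht0 : 0 ≤ d*(z i ^2 + z (i+1) ^2 - 2) := by
        have : 0 ≤ z i ^2 + z (i+1) ^2 - 2 := by linarith
        positivity
      have hsq : (d*(z i ^2 + z (i+1) ^2 - 2))^2 ≤ (a (i+1) + a i - 2*(1-d))^2 := by
        have h5 : d*(z i ^2 + z (i+1) ^2 - 2) ≤ -(a (i+1) + a i - 2*(1-d)) := by linarith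
        calc (d*(z i ^2 + z (i+1) ^2 - 2))^2
            ≤ (-(a (i+1) + a i - 2*(1-d)))^2 := pow_le_pow_left₀ ht0 h5 2
          _ = (a (i+1) + a i - 2*(1-d))^2 := neg_sq _
      have e3 : m i ^2 * d^2 = (d*(z i ^2 + z (i+1) ^2 - 2))^2 := by rw [hmi]; ring
      rw [e3]
      linarith [sq_nonneg (s (i+1) - s i)]
  have hzsum : ∑ i ∈ Finset.range (N-1), (z (i+1) - z i)^2 ≤ S / (2*d) := by
    rw [le_div_iff₀ (by linarith)]
    rw [Finset.sum_mul]
    refine le_trans (Finset.sum_le_sum ?_) hEsum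
    intro i hi
    have : (z (i+1) - z i)^2 * (2*d) = (s (i+1) - s i)^2 := by
      rw [hsz (i+1), hsz i]
      have : (z (i+1) * w - z i * w) = (z (i+1) - z i) * w := by ring
      rw [this, mul_pow, show w^2 = 2*d by rw [pow_two]; exact hwsq]
    rw [this]
    nlinarith [sq_nonneg (a (i+1) + a i - 2*(1-d))]
  -- Cauchy–Schwarz
  set c : ℕ → ℝ := fun i => m i * |z (i+1) - z i| with hcdef
  have hc0 : ∀ i, 0 ≤ c i := fun i => mul_nonneg (hm0 i) (abs_nonneg _)
  have hcs : ∑ i ∈ Finset.range (N-1), c i ≤ 2*C := by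
    have h1 := Finset.sum_mul_sq_le_sq_mul_sq (Finset.range (N-1)) m
      (fun i => |z (i+1) - z i|)
    have h2 : ∑ i ∈ Finset.range (N-1), |z (i+1) - z i| ^ 2
        = ∑ i ∈ Finset.range (N-1), (z (i+1) - z i)^2 := by
      refine Finset.sum_congr rfl ?_
      intro i _; rw [sq_abs]
    rw [h2] at h1
    have h3 : (∑ i ∈ Finset.range (N-1), c i)^2 ≤ (S/d^2) * (S/(2*d)) := by
      refine le_trans h1 ?_
      have hA : 0 ≤ ∑ i ∈ Finset.range (N-1), (m i)^2 :=
        Finset.sum_nonneg fun i _ => sq_nonneg _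
      have hB : 0 ≤ ∑ i ∈ Finset.range (N-1), (z (i+1) - z i)^2 :=
        Finset.sum_nonneg fun i _ => sq_nonneg _
      exact mul_le_mul hmsum hzsum hB (by positivity)
    have hprod : (S/d^2) * (S/(2*d)) ≤ (2*C)^2 := by
      have hs2 : Real.sqrt 2 * Real.sqrt 2 = 2 := Real.mul_self_sqrt (by norm_num)
      have hSsq : S^2 = 8*C^2*d^3 := by
        have e : S^2 = 4*(Real.sqrt 2*Real.sqrt 2)*C^2*(d^2*(Real.sqrt d*Real.sqrt d)) := by
          rw [hSdef]; ring
        rw [e, hs2, hsdsq]; ring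
      have e2 : (S/d^2) * (S/(2*d)) = S^2/(2*d^3) := by
        field_simp
      rw [e2, hSsq, div_le_iff₀ (by positivity)]
      apply le_of_eq; ring
    have hcnn : 0 ≤ ∑ i ∈ Finset.range (N-1), c i :=
      Finset.sum_nonneg fun i _ => hc0 i
    have h4 : (∑ i ∈ Finset.range (N-1), c i)^2 ≤ (2*C)^2 := le_trans h3 hprod
    calc ∑ i ∈ Finset.range (N-1), c i
        = Real.sqrt ((∑ i ∈ Finset.range (N-1), c i)^2) := (Real.sqrt_sq hcnn).symm
      _ ≤ Real.sqrt ((2*C)^2) := Real.sqrt_le_sqrt h4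
      _ = 2*C := Real.sqrt_sq (by positivity)
  -- chain
  have hchain := chain_bound (fun i => max (z i - 2) 0 ^ 2) c (N-1) (fun i _ => hc0 i) ?_
  swap
  · intro i hi
    have hphi := phi_lip (z (i+1)) (z i) (hz0 (i+1)) (hz0 i)
    have hle : max (max ((z (i+1))^2-2) 0) (max ((z i)^2-2) 0) ≤ m i := by
      rw [hmdef]
      have q1 : z (i+1) ^2 - 2 ≤ z i ^2 + z (i+1) ^2 - 2 := by
        have := sq_nonneg (z i); linarith
      have q2 : z i ^2 - 2 ≤ z i ^2 + z (i+1) ^2 - 2 := by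
        have := sq_nonneg (z (i+1)); linarith
      exact max_le
        (max_le (le_trans q1 (le_max_left _ _)) (le_max_right _ _))
        (max_le (le_trans q2 (le_max_left _ _)) (le_max_right _ _))
    calc |max (z (i+1) - 2) 0 ^ 2 - max (z i - 2) 0 ^ 2|
        ≤ max (max ((z (i+1))^2-2) 0) (max ((z i)^2-2) 0) * |z (i+1) - z i| := hphi
      _ ≤ m i * |z (i+1) - z i| :=
          mul_le_mul_of_nonneg_right hle (abs_nonneg _)
  -- anchor gives f j = 0
  have hzj : z j ≤ 2 := by
    have hzj2 : z j ^2 ≤ 2 := by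
      rw [hszsq j] at hjs
      exact le_of_mul_le_mul_right (by linarith) (by linarith : (0:ℝ) < 2*d)
    have h7 : z j ≤ Real.sqrt 2 := by
      rw [← Real.sqrt_sq (hz0 j)]
      exact Real.sqrt_le_sqrt hzj2
    have h8 : Real.sqrt 2 ≤ Real.sqrt 4 := Real.sqrt_le_sqrt (by norm_num)
    rw [show (4:ℝ) = 2^2 by norm_num, Real.sqrt_sq (by norm_num : (0:ℝ) ≤ 2)] at h8
    linarith
  have hfj : max (z j - 2) 0 ^ 2 = 0 := by
    rw [max_eq_right (by linarith)]; norm_num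
  -- conclude for index i₀
  have hbound := hchain j i₀ (by omega) (by omega)
  simp only [hfj] at hbound
  have hfi : max (z i₀ - 2) 0 ^2 ≤ 2*C := by linarith [hcs]
  have hzi : z i₀ ≤ 2 + Real.sqrt (2*C) := by
    rcases le_total (z i₀) 2 with h | h
    · linarith [Real.sqrt_nonneg (2*C)]
    · have : max (z i₀ - 2) 0 = z i₀ - 2 := max_eq_left (by linarith)
      rw [this] at hfi
      have := Real.sqrt_le_sqrt hfi
      rw [Real.sqrt_sq (by linarith)] at this
      linarith
  -- translate to the goal
  have hcr : ‖cross3 (u n i₀) (u n (i₀+1))‖ = s i₀ := by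
    have h1 := norm_cross3_sq (u n i₀) (u n (i₀+1))
    rw [hu n i₀ (by omega), hu n (i₀+1) (by omega)] at h1
    have h2 : ‖cross3 (u n i₀) (u n (i₀+1))‖ = Real.sqrt (‖cross3 (u n i₀) (u n (i₀+1))‖^2) := by
      rw [Real.sqrt_sq (norm_nonneg _)]
    have e : s i₀ = Real.sqrt (1 - (⟪u n i₀, u n (i₀+1)⟫ : ℝ)^2) := rfl
    rw [h2, h1, e]
    congr 1
    ring
  rw [norm_smul, hcr]
  have : ‖(Real.sqrt (2*d))⁻¹‖ = w⁻¹ := by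
    rw [Real.norm_eq_abs, abs_of_nonneg (by positivity)]
  rw [this]
  have : w⁻¹ * s i₀ = z i₀ := by
    rw [hzdef]; field_simp
  rw [this]
  linarith [hzi]
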